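/- Any perfectly reliable and perfectly secret message transmission protocol from Alice to Bob through channels observed by an eavesdropper satisfies H(S) ≤ min over eavesdropper views z of I(X; Y | Z = z), where X is Alice's view, Y is Bob's view, and S → X → Y → Ŝ forms a Markov chain. -/

import Mathlib

open scoped BigOperators Classical
noncomputable section

/-- Shannon entropy (in bits) of a mass function. -/
def ent {S : Type*} [Fintype S] (p : S → ℝ) : ℝ :=
  ∑ s, (if p s = 0 then 0 else -(p s * Real.logb 2 (p s)))

/-- Mutual information (in bits) `I(A;B) = H(A) + H(B) − H(A,B)` of a joint mass function. -/
def mi {A B : Type*} [Fintype A] [Fintype B] (p : A × B → ℝ) : ℝ :=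
  ent (fun a => ∑ b, p (a, b)) + ent (fun b => ∑ a, p (a, b)) - ent p

lemma ent_eq {S : Type*} [Fintype S] (p : S → ℝ) :
    ent p = -∑ s, p s * Real.logb 2 (p s) := by
  rw [ent, ← Finset.sum_neg_distrib]
  refine Finset.sum_congr rfl fun s _ => ?_
  by_cases h : p s = 0 <;> simp [h]

lemma key {A B S : Type*} [Fintype A] [Fintype B] [Fintype S]
    (q : A × B → ℝ) (hq0 : ∀ ab, 0 ≤ q ab) (hq1 : ∑ ab, q ab = 1)
    (g : A → S) (d : B → S) (hsupp : ∀ a b, 0 < q (a, b) → g a = d b) :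
    ent (fun s => ∑ ab : A × B, if g ab.1 = s then q ab else 0) ≤ mi q := by
  classical
  set L : ℝ → ℝ := Real.logb 2 with hL
  set qX : A → ℝ := fun a => ∑ b, q (a, b) with hqX
  set qY : B → ℝ := fun b => ∑ a, q (a, b) with hqY
  set pS : S → ℝ := fun s => ∑ ab : A × B, if g ab.1 = s then q ab else 0 with hpS
  have hqX0 : ∀ a, 0 ≤ qX a := fun a => Finset.sum_nonneg fun b _ => hq0 _
  have hqY0 : ∀ b, 0 ≤ qY b := fun b => Finset.sum_nonneg fun a _ => hq0 _
  have hpS0 : ∀ s, 0 ≤ pS s := fun s =>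
    Finset.sum_nonneg fun ab _ => by by_cases h : g ab.1 = s <;> simp [h, hq0 ab]
  have hle_qX : ∀ a b, q (a, b) ≤ qX a := fun a b =>
    Finset.single_le_sum (fun b _ => hq0 (a, b)) (Finset.mem_univ b)
  have hle_qY : ∀ a b, q (a, b) ≤ qY b := fun a b =>
    Finset.single_le_sum (fun a _ => hq0 (a, b)) (Finset.mem_univ a)
  have hle_pS : ∀ a b, q (a, b) ≤ pS (g a) := by
    intro a b
    have h1 := Finset.single_le_sum (f := fun ab : A × B => if g ab.1 = g a then q ab else 0)
      (fun ab _ => by by_cases h : g ab.1 = g a <;> simp [h, hq0 ab]) (Finset.mem_univ (a, b))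
    simpa using h1
  -- pS is also the pushforward of qY under d
  have hpSd : ∀ s, pS s = ∑ b, if d b = s then qY b else 0 := by
    intro s
    have h2 : ∀ b, (if d b = s then qY b else 0) = ∑ a, if d b = s then q (a, b) else 0 := by
      intro b; by_cases h : d b = s <;> simp [h, hqY]
    simp_rw [h2]
    rw [Finset.sum_comm]
    show (∑ ab : A × B, if g ab.1 = s then q ab else 0) = _
    rw [Fintype.sum_prod_type]
    refine Finset.sum_congr rfl fun a _ => Finset.sum_congr rfl fun b _ => ?_
    rcases eq_or_lt_of_le (hq0 (a, b)) with h | h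
    · simp [← h]
    · rw [hsupp a b h]
  -- rewrite entropies into signed sums
  rw [mi, ent_eq, ent_eq, ent_eq, ent_eq]
  have hA : ∑ s, pS s * L (pS s) = ∑ ab : A × B, q ab * L (pS (g ab.1)) := by
    have h1 : ∀ s, pS s * L (pS s) = ∑ ab : A × B, if g ab.1 = s then q ab * L (pS s) else 0 := by
      intro s
      rw [show pS s = ∑ ab : A × B, if g ab.1 = s then q ab else 0 from rfl, Finset.sum_mul]
      exact Finset.sum_congr rfl fun ab _ => by by_cases h : g ab.1 = s <;> simp [h]
    simp_rw [h1]
    rw [Finset.sum_comm]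
    exact Finset.sum_congr rfl fun ab _ => by simp
  have hB : ∑ a, qX a * L (qX a) = ∑ ab : A × B, q ab * L (qX ab.1) := by
    rw [Fintype.sum_prod_type]
    exact Finset.sum_congr rfl fun a _ => by rw [show qX a = ∑ b, q (a, b) from rfl, Finset.sum_mul]
  have hC : ∑ b, qY b * L (qY b) = ∑ ab : A × B, q ab * L (qY ab.2) := by
    rw [Fintype.sum_prod_type, Finset.sum_comm]
    exact Finset.sum_congr rfl fun b _ => by rw [show qY b = ∑ a, q (a, b) from rfl, Finset.sum_mul]
  rw [hA, hB, hC]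
  have hlog2 : (0:ℝ) < Real.log 2 := Real.log_pos (by norm_num)
  set r : A × B → ℝ := fun ab => if 0 < q ab then qX ab.1 * qY ab.2 / pS (g ab.1) else 0 with hr
  have hterm : ∀ ab : A × B,
      q ab * L (qX ab.1) + q ab * L (qY ab.2) - q ab * L (q ab) - q ab * L (pS (g ab.1))
        ≤ (r ab - q ab) / Real.log 2 := by
    rintro ⟨a, b⟩
    rcases eq_or_lt_of_le (hq0 (a, b)) with h | h
    · simp [hr, ← h]
    · have hx : 0 < qX a := lt_of_lt_of_le h (hle_qX a b)
      have hy : 0 < qY b := lt_of_lt_of_le h (hle_qY a b)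
      have hp : 0 < pS (g a) := lt_of_lt_of_le h (hle_pS a b)
      have hu : 0 < qX a * qY b / (q (a, b) * pS (g a)) := by positivity
      have hlog := Real.log_le_sub_one_of_pos hu
      have hrab : r (a, b) = qX a * qY b / pS (g a) := by
        rw [show r (a, b) = if 0 < q (a, b) then qX a * qY b / pS (g a) else 0 from rfl, if_pos h]
      have hexp : L (qX a) + L (qY b) - L (q (a, b)) - L (pS (g a))
          = Real.log (qX a * qY b / (q (a, b) * pS (g a))) / Real.log 2 := by
        rw [hL, Real.log_div (by positivity) (by positivity),
          Real.log_mul (ne_of_gt hx) (ne_of_gt hy), Real.log_mul (ne_of_gt h) (ne_of_gt hp)]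
        simp [Real.logb]
        ring
      have hmain : q (a, b) * Real.log (qX a * qY b / (q (a, b) * pS (g a)))
          ≤ qX a * qY b / pS (g a) - q (a, b) := by
        calc q (a, b) * Real.log (qX a * qY b / (q (a, b) * pS (g a)))
            ≤ q (a, b) * (qX a * qY b / (q (a, b) * pS (g a)) - 1) :=
              mul_le_mul_of_nonneg_left hlog (le_of_lt h)
          _ = qX a * qY b / pS (g a) - q (a, b) := by field_simp
      have hrw : q (a, b) * L (qX a) + q (a, b) * L (qY b) - q (a, b) * L (q (a, b))
            - q (a, b) * L (pS (g a))
          = q (a, b) * Real.log (qX a * qY b / (q (a, b) * pS (g a))) / Real.log 2 := by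
        rw [show q (a, b) * L (qX a) + q (a, b) * L (qY b) - q (a, b) * L (q (a, b))
            - q (a, b) * L (pS (g a))
          = q (a, b) * (L (qX a) + L (qY b) - L (q (a, b)) - L (pS (g a))) by ring, hexp]
        ring
      rw [hrw, hrab]
      gcongr
  -- sum of r is at most 1
  have hrsum : ∑ ab : A × B, r ab ≤ 1 := by
    have hr' : ∀ ab : A × B, r ab ≤
        (if g ab.1 = d ab.2 ∧ 0 < pS (g ab.1) then qX ab.1 * qY ab.2 / pS (g ab.1) else 0) := by
      rintro ⟨a, b⟩
      by_cases h : 0 < q (a, b)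
      · rw [show r (a, b) = if 0 < q (a, b) then qX a * qY b / pS (g a) else 0 from rfl, if_pos h,
          if_pos ⟨hsupp a b h, lt_of_lt_of_le h (hle_pS a b)⟩]
      · rw [show r (a, b) = if 0 < q (a, b) then qX a * qY b / pS (g a) else 0 from rfl, if_neg h]
        split
        · next hc => exact div_nonneg (mul_nonneg (hqX0 a) (hqY0 b)) (le_of_lt hc.2)
        · exact le_refl 0
    calc ∑ ab : A × B, r ab
        ≤ ∑ ab : A × B, (if g ab.1 = d ab.2 ∧ 0 < pS (g ab.1)
            then qX ab.1 * qY ab.2 / pS (g ab.1) else 0) :=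
          Finset.sum_le_sum fun ab _ => hr' ab
      _ ≤ ∑ a, qX a := by
          rw [Fintype.sum_prod_type]
          refine Finset.sum_le_sum fun a _ => ?_
          by_cases hp : 0 < pS (g a)
          · have h3 : ∀ b, (if g a = d b ∧ 0 < pS (g a) then qX a * qY b / pS (g a) else 0)
                = (if d b = g a then qY b else 0) * (qX a / pS (g a)) := by
              intro b
              by_cases h : g a = d b
              · rw [if_pos ⟨h, hp⟩, if_pos h.symm]; ring
              · rw [if_neg (fun hc => h hc.1), if_neg (fun hc => h hc.symm), zero_mul]
            simp_rw [h3]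
            rw [← Finset.sum_mul, ← hpSd (g a)]
            exact le_of_eq (by field_simp)
          · have h3 : ∀ b, (if g a = d b ∧ 0 < pS (g a) then qX a * qY b / pS (g a) else 0) = 0 := by
              intro b; rw [if_neg (fun hc => hp hc.2)]
            simp_rw [h3]
            simpa using hqX0 a
      _ = 1 := by rw [← hq1, Fintype.sum_prod_type]
  -- put everything together
  have hsum := Finset.sum_le_sum fun ab (_ : ab ∈ Finset.univ) => hterm ab
  have hrqe : ∑ ab : A × B, (r ab - q ab) / Real.log 2 = (∑ ab : A × B, r ab - 1) / Real.log 2 := by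
    rw [← Finset.sum_div, Finset.sum_sub_distrib, hq1]
  have hfin : ∑ ab : A × B, (r ab - q ab) / Real.log 2 ≤ 0 := by
    rw [hrqe]
    exact div_nonpos_of_nonpos_of_nonneg (by linarith) (le_of_lt hlog2)
  have hexpand : ∑ ab : A × B,
      (q ab * L (qX ab.1) + q ab * L (qY ab.2) - q ab * L (q ab) - q ab * L (pS (g ab.1)))
      = (∑ ab : A × B, q ab * L (qX ab.1)) + (∑ ab : A × B, q ab * L (qY ab.2))
        - (∑ ab : A × B, q ab * L (q ab)) - (∑ ab : A × B, q ab * L (pS (g ab.1))) := by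
    simp [Finset.sum_add_distrib, Finset.sum_sub_distrib]
  rw [hexpand] at hsum
  linarith [hsum, hfin]

/-- **Perfect secrecy and perfect reliability bound the message entropy by conditional mutual
information.**  Let `S` be the message, `X` Alice's view, `Y` Bob's view, `Z` Eve's view, and
`Ŝ = d(Y)` Bob's estimate, with the Markov chain `S → X → Y → Ŝ`.  Perfect secrecy:
`H(S | Z = z) = H(S)` for every view `z` of positive probability.  Perfect reliability:
`Ŝ = S` on the support.  Then `H(S) ≤ I(X; Y | Z = z)` for every view `z` of positive
probability, i.e. `H(S) ≤ min_z I(X; Y | Z = z)`. -/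
theorem perfect_pmt_entropy_bound
    {Ω 𝒮 𝒳 𝒴 𝒵 : Type*} [Fintype Ω] [Fintype 𝒮] [Fintype 𝒳] [Fintype 𝒴] [Fintype 𝒵]
    (μ : Ω → ℝ) (hμ0 : ∀ ω, 0 ≤ μ ω) (hμ1 : ∑ ω, μ ω = 1)
    (S : Ω → 𝒮) (X : Ω → 𝒳) (Y : Ω → 𝒴) (Zf : Ω → 𝒵) (d : 𝒴 → 𝒮)
    -- Markov chain S → X → Y
    (hmarkov : ∀ (s : 𝒮) (x : 𝒳) (y : 𝒴),
      (∑ ω, if S ω = s ∧ X ω = x ∧ Y ω = y then μ ω else 0) *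
          (∑ ω, if X ω = x then μ ω else 0)
        = (∑ ω, if S ω = s ∧ X ω = x then μ ω else 0) *
            (∑ ω, if X ω = x ∧ Y ω = y then μ ω else 0))
    -- perfect reliability: Ŝ = d(Y) = S
    (hrel : ∀ ω, 0 < μ ω → d (Y ω) = S ω)
    -- perfect secrecy: H(S | Z = z) = H(S) for every view z of positive probability
    (hsec : ∀ z : 𝒵, 0 < (∑ ω, if Zf ω = z then μ ω else 0) →
      ent (fun s => (∑ ω, if S ω = s ∧ Zf ω = z then μ ω else 0) /
            (∑ ω, if Zf ω = z then μ ω else 0))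
        = ent (fun s => ∑ ω, if S ω = s then μ ω else 0)) :
    ∀ z : 𝒵, 0 < (∑ ω, if Zf ω = z then μ ω else 0) →
      ent (fun s => ∑ ω, if S ω = s then μ ω else 0) ≤
        mi (fun xy : 𝒳 × 𝒴 =>
          (∑ ω, if X ω = xy.1 ∧ Y ω = xy.2 ∧ Zf ω = z then μ ω else 0) /
            (∑ ω, if Zf ω = z then μ ω else 0)) := by

  classical
  intro z hz
  set pz : ℝ := ∑ ω, if Zf ω = z then μ ω else 0 with hpz
  -- S is determined by X on the support
  have huniq : ∀ ω ω', 0 < μ ω → 0 < μ ω' → X ω = X ω' → S ω = S ω' := by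
    intro ω ω' hω hω' hXX
    by_contra hne
    have hm := hmarkov (S ω) (X ω) (Y ω')
    have hC : (∑ ω'', if S ω'' = S ω ∧ X ω'' = X ω ∧ Y ω'' = Y ω' then μ ω'' else 0) = 0 := by
      apply Finset.sum_eq_zero
      intro ω'' _
      split
      next hcond =>
        rcases eq_or_lt_of_le (hμ0 ω'') with h0 | h0
        · exact h0.symm
        · exact absurd (by rw [← hcond.1, ← hrel ω'' h0, hcond.2.2, hrel ω' hω']) hne
      next => rfl
    have hApos : 0 < ∑ ω'', if S ω'' = S ω ∧ X ω'' = X ω then μ ω'' else 0 := by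
      refine lt_of_lt_of_le hω ?_
      have h1 := Finset.single_le_sum
        (f := fun ω'' => if S ω'' = S ω ∧ X ω'' = X ω then μ ω'' else 0)
        (fun i _ => by by_cases hcc : S i = S ω ∧ X i = X ω <;> simp [hcc, hμ0 i])
        (Finset.mem_univ ω)
      simpa using h1
    have hBpos : 0 < ∑ ω'', if X ω'' = X ω ∧ Y ω'' = Y ω' then μ ω'' else 0 := by
      refine lt_of_lt_of_le hω' ?_
      have h1 := Finset.single_le_sum
        (f := fun ω'' => if X ω'' = X ω ∧ Y ω'' = Y ω' then μ ω'' else 0)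
        (fun i _ => by by_cases hcc : X i = X ω ∧ Y i = Y ω' <;> simp [hcc, hμ0 i])
        (Finset.mem_univ ω')
      simpa [hXX] using h1
    rw [hC, zero_mul] at hm
    exact absurd hm.symm (ne_of_gt (mul_pos hApos hBpos))
  have hex : ∃ ω₀, 0 < μ ω₀ := by
    by_contra h
    push_neg at h
    have h0 : ∀ ω, μ ω = 0 := fun ω => le_antisymm (h ω) (hμ0 ω)
    simp [h0] at hμ1
  obtain ⟨ω₀, hω₀⟩ := hex
  set g : 𝒳 → 𝒮 := fun x => if h : ∃ ω, 0 < μ ω ∧ X ω = x then S h.choose else S ω₀ with hgdef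
  have hg : ∀ ω, 0 < μ ω → g (X ω) = S ω := by
    intro ω hω
    have hex2 : ∃ ω', 0 < μ ω' ∧ X ω' = X ω := ⟨ω, hω, rfl⟩
    rw [show g (X ω) = if h : ∃ ω', 0 < μ ω' ∧ X ω' = X ω then S h.choose else S ω₀ from rfl,
      dif_pos hex2]
    obtain ⟨h1, h2⟩ := hex2.choose_spec
    exact huniq _ ω h1 hω h2
  set q : 𝒳 × 𝒴 → ℝ := fun xy =>
    (∑ ω, if X ω = xy.1 ∧ Y ω = xy.2 ∧ Zf ω = z then μ ω else 0) / pz with hqdef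
  have hq0 : ∀ xy, 0 ≤ q xy := fun xy =>
    div_nonneg (Finset.sum_nonneg fun ω _ => by split <;> [exact hμ0 ω; exact le_refl 0])
      (le_of_lt hz)
  have hnum : ∀ s : 𝒮, (∑ xy : 𝒳 × 𝒴, if g xy.1 = s then
        (∑ ω, if X ω = xy.1 ∧ Y ω = xy.2 ∧ Zf ω = z then μ ω else 0) else 0)
      = ∑ ω, if S ω = s ∧ Zf ω = z then μ ω else 0 := by
    intro s
    have h1 : ∀ xy : 𝒳 × 𝒴, (if g xy.1 = s then
          (∑ ω, if X ω = xy.1 ∧ Y ω = xy.2 ∧ Zf ω = z then μ ω else 0) else 0)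
        = ∑ ω, if g xy.1 = s ∧ (X ω = xy.1 ∧ Y ω = xy.2 ∧ Zf ω = z) then μ ω else 0 := by
      intro xy; by_cases h : g xy.1 = s <;> simp [h]
    simp_rw [h1]
    rw [Finset.sum_comm]
    refine Finset.sum_congr rfl fun ω _ => ?_
    rw [Finset.sum_eq_single ((X ω, Y ω) : 𝒳 × 𝒴)]
    · rcases eq_or_lt_of_le (hμ0 ω) with h0 | h0
      · simp [← h0]
      · rw [hg ω h0]; simp
    · intro xy _ hne
      split
      next hcond => exact absurd (Prod.ext_iff.mpr ⟨hcond.2.1.symm, hcond.2.2.1.symm⟩) hne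
      next => rfl
    · intro h; exact absurd (Finset.mem_univ _) h
  have htot : ∑ xy : 𝒳 × 𝒴,
      (∑ ω, if X ω = xy.1 ∧ Y ω = xy.2 ∧ Zf ω = z then μ ω else 0) = pz := by
    rw [Finset.sum_comm, hpz]
    refine Finset.sum_congr rfl fun ω _ => ?_
    rw [Finset.sum_eq_single ((X ω, Y ω) : 𝒳 × 𝒴)]
    · simp
    · intro xy _ hne
      split
      next hcond => exact absurd (Prod.ext_iff.mpr ⟨hcond.1.symm, hcond.2.1.symm⟩) hne
      next => rfl
    · intro h; exact absurd (Finset.mem_univ _) h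
  have hq1 : ∑ xy : 𝒳 × 𝒴, q xy = 1 := by
    rw [show (∑ xy : 𝒳 × 𝒴, q xy) = (∑ xy : 𝒳 × 𝒴,
        (∑ ω, if X ω = xy.1 ∧ Y ω = xy.2 ∧ Zf ω = z then μ ω else 0)) / pz by
      rw [Finset.sum_div], htot, div_self (ne_of_gt hz)]
  have hsupp : ∀ x y, 0 < q (x, y) → g x = d y := by
    intro x y hpos
    have hnumpos : 0 < ∑ ω, if X ω = x ∧ Y ω = y ∧ Zf ω = z then μ ω else 0 := by
      have h2 : 0 < (∑ ω, if X ω = x ∧ Y ω = y ∧ Zf ω = z then μ ω else 0) / pz := hpos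
      rcases div_pos_iff.mp h2 with ⟨h3, _⟩ | ⟨_, h4⟩
      · exact h3
      · exact absurd hz (not_lt.mpr (le_of_lt h4))
    obtain ⟨ω, -, hne⟩ := Finset.exists_ne_zero_of_sum_ne_zero hnumpos.ne'
    by_cases hc : X ω = x ∧ Y ω = y ∧ Zf ω = z
    · rw [if_pos hc] at hne
      have hμpos : 0 < μ ω := lt_of_le_of_ne (hμ0 ω) (Ne.symm hne)
      rw [← hc.1, ← hc.2.1, hg ω hμpos, hrel ω hμpos]
    · rw [if_neg hc] at hne
      exact absurd rfl hne
  rw [← hsec z hz]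
  have hfun : (fun s => (∑ ω, if S ω = s ∧ Zf ω = z then μ ω else 0) / pz)
      = fun s => ∑ xy : 𝒳 × 𝒴, if g xy.1 = s then q xy else 0 := by
    funext s
    rw [← hnum s, Finset.sum_div]
    refine Finset.sum_congr rfl fun xy _ => ?_
    by_cases h : g xy.1 = s
    · rw [if_pos h, if_pos h, hqdef]
    · rw [if_neg h, if_neg h, zero_div]
  rw [hfun]
  exact key q hq0 hq1 g d hsupp
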